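/- Let G = 2₊^{1+4} with its standard presentation, A a commutative ring, and ρ : G → GL₂(A) any representation. Then tr(ρ(a²)) = 2. -/

import Mathlib

def extraspecialRels : Set (FreeGroup (Fin 4)) :=
  { (FreeGroup.of 0) ^ 4, (FreeGroup.of 1) ^ 2, (FreeGroup.of 3) ^ 2,
    (FreeGroup.of 2) ^ 2 * ((FreeGroup.of 0) ^ 2)⁻¹,
    FreeGroup.of 1 * FreeGroup.of 0 * FreeGroup.of 1 * FreeGroup.of 0,
    FreeGroup.of 0 * FreeGroup.of 2 * (FreeGroup.of 0)⁻¹ * (FreeGroup.of 2)⁻¹,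
    FreeGroup.of 0 * FreeGroup.of 3 * (FreeGroup.of 0)⁻¹ * (FreeGroup.of 3)⁻¹,
    FreeGroup.of 1 * FreeGroup.of 2 * (FreeGroup.of 1)⁻¹ * (FreeGroup.of 2)⁻¹,
    FreeGroup.of 1 * FreeGroup.of 3 * (FreeGroup.of 1)⁻¹ * (FreeGroup.of 3)⁻¹,
    FreeGroup.of 3 * FreeGroup.of 2 * FreeGroup.of 3 *
      ((FreeGroup.of 0) ^ 2 * FreeGroup.of 2)⁻¹ }

abbrev Extraspecial32 : Type := PresentedGroup extraspecialRels

set_option maxHeartbeats 4000000 in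
/-- For any commutative ring `A` and any representation `ρ : 2₊^{1+4} → GL₂(A)`, the trace of
`ρ(a²)` equals `2`. -/
theorem extraspecial_trace_a_sq_eq_two
    {A : Type*} [CommRing A]
    (ρ : Extraspecial32 →* Matrix.GeneralLinearGroup (Fin 2) A) :
    Matrix.trace
      ((ρ ((PresentedGroup.of 0 : Extraspecial32) ^ 2)) : Matrix (Fin 2) (Fin 2) A) = 2 := by
  have hrel : ∀ r ∈ extraspecialRels, ρ (PresentedGroup.mk extraspecialRels r) = 1 := by
    intro r hr
    have h1 : (PresentedGroup.mk extraspecialRels) r = 1 :=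
      (QuotientGroup.eq_one_iff r).mpr (Subgroup.subset_normalClosure hr)
    rw [h1, map_one]
  set a : Matrix.GeneralLinearGroup (Fin 2) A := ρ (PresentedGroup.of 0) with ha
  set b : Matrix.GeneralLinearGroup (Fin 2) A := ρ (PresentedGroup.of 1) with hb
  set c : Matrix.GeneralLinearGroup (Fin 2) A := ρ (PresentedGroup.of 2) with hc
  set d : Matrix.GeneralLinearGroup (Fin 2) A := ρ (PresentedGroup.of 3) with hd
  have key : ∀ r ∈ extraspecialRels, (FreeGroup.lift
      (fun i => (![a,b,c,d] : Fin 4 → _) i)) r = 1 := by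
    intro r hr
    have h2 : (FreeGroup.lift fun i => ρ (PresentedGroup.of i)) r = 1 := by
      have : (FreeGroup.lift fun i => ρ (PresentedGroup.of i)) r
          = ρ (PresentedGroup.mk extraspecialRels r) := by
        have : ρ.comp (PresentedGroup.mk extraspecialRels)
            = FreeGroup.lift fun i => ρ (PresentedGroup.of i) := by
          apply FreeGroup.ext_hom
          intro i
          simp [PresentedGroup.mk, PresentedGroup.of]
        rw [← this]; rfl
      rw [this]; exact hrel r hr
    have hfun : (fun i => (![a,b,c,d] : Fin 4 → _) i) = fun i => ρ (PresentedGroup.of i) := by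
      funext i
      fin_cases i <;> rfl
    rw [hfun]
    exact h2
    -- membership of each relator, and the nine relations in GL
  have r1 : a^4 = 1 := by
    have := key ((FreeGroup.of 0)^4) (by simp [extraspecialRels]); simpa using this
  have r2 : b^2 = 1 := by
    have := key ((FreeGroup.of 1)^2) (by simp [extraspecialRels]); simpa using this
  have r3 : d^2 = 1 := by
    have := key ((FreeGroup.of 3)^2) (by simp [extraspecialRels]); simpa using this
  have r4 : c^2 = a^2 := by
    have := key ((FreeGroup.of 2)^2 * ((FreeGroup.of 0)^2)⁻¹) (by simp [extraspecialRels])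
    simp only [map_mul, map_pow, map_inv, FreeGroup.lift_apply_of] at this
    exact mul_inv_eq_one.mp this
  have r5 : b*a*b*a = 1 := by
    have := key (FreeGroup.of 1 * FreeGroup.of 0 * FreeGroup.of 1 * FreeGroup.of 0)
      (by simp [extraspecialRels])
    simpa using this
  have r6 : a*c = c*a := by
    have := key (FreeGroup.of 0 * FreeGroup.of 2 * (FreeGroup.of 0)⁻¹ * (FreeGroup.of 2)⁻¹)
      (by simp [extraspecialRels])
    simp only [map_mul, map_inv, FreeGroup.lift_apply_of] at this
    exact mul_inv_eq_iff_eq_mul.mp (mul_inv_eq_one.mp this)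
  have r7 : a*d = d*a := by
    have := key (FreeGroup.of 0 * FreeGroup.of 3 * (FreeGroup.of 0)⁻¹ * (FreeGroup.of 3)⁻¹)
      (by simp [extraspecialRels])
    simp only [map_mul, map_inv, FreeGroup.lift_apply_of] at this
    exact mul_inv_eq_iff_eq_mul.mp (mul_inv_eq_one.mp this)
  have r8 : b*c = c*b := by
    have := key (FreeGroup.of 1 * FreeGroup.of 2 * (FreeGroup.of 1)⁻¹ * (FreeGroup.of 2)⁻¹)
      (by simp [extraspecialRels])
    simp only [map_mul, map_inv, FreeGroup.lift_apply_of] at this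
    exact mul_inv_eq_iff_eq_mul.mp (mul_inv_eq_one.mp this)
  have r9 : b*d = d*b := by
    have := key (FreeGroup.of 1 * FreeGroup.of 3 * (FreeGroup.of 1)⁻¹ * (FreeGroup.of 3)⁻¹)
      (by simp [extraspecialRels])
    simp only [map_mul, map_inv, FreeGroup.lift_apply_of] at this
    exact mul_inv_eq_iff_eq_mul.mp (mul_inv_eq_one.mp this)
  have r10 : d*c*d = a^2*c := by
    have := key (FreeGroup.of 3 * FreeGroup.of 2 * FreeGroup.of 3 *
        ((FreeGroup.of 0)^2 * FreeGroup.of 2)⁻¹) (by simp [extraspecialRels])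
    simp only [map_mul, map_pow, map_inv, FreeGroup.lift_apply_of] at this
    exact mul_inv_eq_one.mp this
  -- normalization lemmas in the group GL
  have ha4 : a*(a*(a*a)) = 1 := by
    have := r1; rw [show (4:ℕ) = 2+2 from rfl, pow_add, pow_two] at this
    simpa [mul_assoc] using this
  have pa : ∀ x, a*(a*(a*(a*x))) = x := fun x => by
    simpa [mul_assoc] using congrArg (· * x) ha4
  have pb' : b*b = 1 := by rw [← pow_two]; exact r2
  have pb : ∀ x, b*(b*x) = x := fun x => by
    simpa [mul_assoc] using congrArg (· * x) pb'
  have pd' : d*d = 1 := by rw [← pow_two]; exact r3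
  have pd : ∀ x, d*(d*x) = x := fun x => by
    simpa [mul_assoc] using congrArg (· * x) pd'
  have pc' : c*c = a*a := by rw [← pow_two, ← pow_two]; exact r4
  have pc : ∀ x, c*(c*x) = a*(a*x) := fun x => by
    simpa [mul_assoc] using congrArg (· * x) pc'
  have hainv : a⁻¹ = a*(a*a) := inv_eq_of_mul_eq_one_right ha4
  have pba' : b*a = a*(a*(a*b)) := by
    have h1 : b*a*b = a⁻¹ := mul_eq_one_iff_eq_inv.mp r5
    have h2 := congrArg (· * b) h1
    simpa [mul_assoc, pb', hainv] using h2
  have pba : ∀ x, b*(a*x) = a*(a*(a*(b*x))) := fun x => by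
    simpa [mul_assoc] using congrArg (· * x) pba'
  have pca' : c*a = a*c := r6.symm
  have pca : ∀ x, c*(a*x) = a*(c*x) := fun x => by
    simpa [mul_assoc] using congrArg (· * x) pca'
  have pda' : d*a = a*d := r7.symm
  have pda : ∀ x, d*(a*x) = a*(d*x) := fun x => by
    simpa [mul_assoc] using congrArg (· * x) pda'
  have pbc' : b*c = c*b := r8
  have pbc : ∀ x, b*(c*x) = c*(b*x) := fun x => by
    simpa [mul_assoc] using congrArg (· * x) pbc'
  have pbd' : b*d = d*b := r9
  have pbd : ∀ x, b*(d*x) = d*(b*x) := fun x => by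
    simpa [mul_assoc] using congrArg (· * x) pbd'
  have pdc' : d*c = a*(a*(c*d)) := by
    have h2 := congrArg (· * d) r10
    rw [pow_two] at h2
    simpa [mul_assoc, pd'] using h2
  have pdc : ∀ x, d*(c*x) = a*(a*(c*(d*x))) := fun x => by
    simpa [mul_assoc] using congrArg (· * x) pdc'
  have hCCg : c*c = a*a := by
    simp only [mul_assoc, pa, pb, pc, pd, pba, pca, pda, pbc, pbd, pdc,
      pb', pd', pc', pba', pca', pda', pbc', pbd', pdc', ha4, mul_one, one_mul]
  have hZZg : a*a*(a*a) = 1 := by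
    simp only [mul_assoc, pa, pb, pc, pd, pba, pca, pda, pbc, pbd, pdc,
      pb', pd', pc', pba', pca', pda', pbc', pbd', pdc', ha4, mul_one, one_mul]
  have hXCg : a*c = c*a := by
    simp only [mul_assoc, pa, pb, pc, pd, pba, pca, pda, pbc, pbd, pdc,
      pb', pd', pc', pba', pca', pda', pbc', pbd', pdc', ha4, mul_one, one_mul]
  have hBBg : b*b = 1 := by
    simp only [mul_assoc, pa, pb, pc, pd, pba, pca, pda, pbc, pbd, pdc,
      pb', pd', pc', pba', pca', pda', pbc', pbd', pdc', ha4, mul_one, one_mul]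
  have hDDg : d*d = 1 := by
    simp only [mul_assoc, pa, pb, pc, pd, pba, pca, pda, pbc, pbd, pdc,
      pb', pd', pc', pba', pca', pda', pbc', pbd', pdc', ha4, mul_one, one_mul]
  have hBXBXg : b*a*(b*a) = 1 := by
    simp only [mul_assoc, pa, pb, pc, pd, pba, pca, pda, pbc, pbd, pdc,
      pb', pd', pc', pba', pca', pda', pbc', pbd', pdc', ha4, mul_one, one_mul]
  have hDCDCg : d*c*(d*c) = 1 := by
    simp only [mul_assoc, pa, pb, pc, pd, pba, pca, pda, pbc, pbd, pdc,
      pb', pd', pc', pba', pca', pda', pbc', pbd', pdc', ha4, mul_one, one_mul]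
  have hBCg : b*c = c*b := by
    simp only [mul_assoc, pa, pb, pc, pd, pba, pca, pda, pbc, pbd, pdc,
      pb', pd', pc', pba', pca', pda', pbc', pbd', pdc', ha4, mul_one, one_mul]
  have hDXg : d*a = a*d := by
    simp only [mul_assoc, pa, pb, pc, pd, pba, pca, pda, pbc, pbd, pdc,
      pb', pd', pc', pba', pca', pda', pbc', pbd', pdc', ha4, mul_one, one_mul]
  have hBDg : b*d = d*b := by
    simp only [mul_assoc, pa, pb, pc, pd, pba, pca, pda, pbc, pbd, pdc,
      pb', pd', pc', pba', pca', pda', pbc', pbd', pdc', ha4, mul_one, one_mul]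
  have hZDg : a*a*d = d*(a*a) := by
    simp only [mul_assoc, pa, pb, pc, pd, pba, pca, pda, pbc, pbd, pdc,
      pb', pd', pc', pba', pca', pda', pbc', pbd', pdc', ha4, mul_one, one_mul]
  have hBXBg : b*(a*b) = a*a*a := by
    simp only [mul_assoc, pa, pb, pc, pd, pba, pca, pda, pbc, pbd, pdc,
      pb', pd', pc', pba', pca', pda', pbc', pbd', pdc', ha4, mul_one, one_mul]
  have hDCDg : d*(c*d) = a*a*c := by
    simp only [mul_assoc, pa, pb, pc, pd, pba, pca, pda, pbc, pbd, pdc,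
      pb', pd', pc', pba', pca', pda', pbc', pbd', pdc', ha4, mul_one, one_mul]
  have hBCBg : b*(c*b) = c := by
    simp only [mul_assoc, pa, pb, pc, pd, pba, pca, pda, pbc, pbd, pdc,
      pb', pd', pc', pba', pca', pda', pbc', pbd', pdc', ha4, mul_one, one_mul]
  have hDXDg : d*(a*d) = a := by
    simp only [mul_assoc, pa, pb, pc, pd, pba, pca, pda, pbc, pbd, pdc,
      pb', pd', pc', pba', pca', pda', pbc', pbd', pdc', ha4, mul_one, one_mul]
  have hBXCBg : b*(a*(c*b)) = a*(a*(a*c)) := by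
    simp only [mul_assoc, pa, pb, pc, pd, pba, pca, pda, pbc, pbd, pdc,
      pb', pd', pc', pba', pca', pda', pbc', pbd', pdc', ha4, mul_one, one_mul]
  have hDXDXg : d*a*(d*a) = a*a := by
    simp only [mul_assoc, pa, pb, pc, pd, pba, pca, pda, pbc, pbd, pdc,
      pb', pd', pc', pba', pca', pda', pbc', pbd', pdc', ha4, mul_one, one_mul]
  -- pass to matrices
  set x : Matrix (Fin 2) (Fin 2) A := ↑a with hxdef
  set y : Matrix (Fin 2) (Fin 2) A := ↑c with hydef
  set w : Matrix (Fin 2) (Fin 2) A := ↑b with hwdef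
  set v : Matrix (Fin 2) (Fin 2) A := ↑d with hvdef
  have hCCm : y * y = x * x := by
    have h := congrArg Units.val hCCg
    simpa [Units.val_mul, mul_assoc] using h
  have hZZm : x * x * x * x = (1 : Matrix (Fin 2) (Fin 2) A) := by
    have h := congrArg Units.val hZZg
    simpa [Units.val_mul, mul_assoc] using h
  have hXCm : x * y = y * x := by
    have h := congrArg Units.val hXCg
    simpa [Units.val_mul, mul_assoc] using h
  have hBBm : w * w = (1 : Matrix (Fin 2) (Fin 2) A) := by
    have h := congrArg Units.val hBBg
    simpa [Units.val_mul, mul_assoc] using h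
  have hDDm : v * v = (1 : Matrix (Fin 2) (Fin 2) A) := by
    have h := congrArg Units.val hDDg
    simpa [Units.val_mul, mul_assoc] using h
  have hBXBXm : w * x * w * x = (1 : Matrix (Fin 2) (Fin 2) A) := by
    have h := congrArg Units.val hBXBXg
    simpa [Units.val_mul, mul_assoc] using h
  have hDCDCm : v * y * v * y = (1 : Matrix (Fin 2) (Fin 2) A) := by
    have h := congrArg Units.val hDCDCg
    simpa [Units.val_mul, mul_assoc] using h
  have hBCm : w * y = y * w := by
    have h := congrArg Units.val hBCg
    simpa [Units.val_mul, mul_assoc] using h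
  have hDXm : v * x = x * v := by
    have h := congrArg Units.val hDXg
    simpa [Units.val_mul, mul_assoc] using h
  have hBDm : w * v = v * w := by
    have h := congrArg Units.val hBDg
    simpa [Units.val_mul, mul_assoc] using h
  have hZDm : x * x * v = v * x * x := by
    have h := congrArg Units.val hZDg
    simpa [Units.val_mul, mul_assoc] using h
  have hBXBm : w * x * w = x * x * x := by
    have h := congrArg Units.val hBXBg
    simpa [Units.val_mul, mul_assoc] using h
  have hDCDm : v * y * v = x * x * y := by
    have h := congrArg Units.val hDCDg
    simpa [Units.val_mul, mul_assoc] using h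
  have hBCBm : w * y * w = y := by
    have h := congrArg Units.val hBCBg
    simpa [Units.val_mul, mul_assoc] using h
  have hDXDm : v * x * v = x := by
    have h := congrArg Units.val hDXDg
    simpa [Units.val_mul, mul_assoc] using h
  have hBXCBm : w * x * y * w = x * x * x * y := by
    have h := congrArg Units.val hBXCBg
    simpa [Units.val_mul, mul_assoc] using h
  have hDXDXm : v * x * v * x = x * x := by
    have h := congrArg Units.val hDXDXg
    simpa [Units.val_mul, mul_assoc] using h
  have hCC_0 := congrFun (congrFun hCCm 0) 0
  have hCC_1 := congrFun (congrFun hCCm 0) 1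
  have hCC_2 := congrFun (congrFun hCCm 1) 0
  have hCC_3 := congrFun (congrFun hCCm 1) 1
  simp only [Matrix.mul_apply, Fin.sum_univ_two, Matrix.one_apply,
    Fin.isValue, one_ne_zero, zero_ne_one, ite_true, ite_false, reduceIte,
    ne_eq, not_false_eq_true, if_true, if_false] at hCC_0 hCC_1 hCC_2 hCC_3
  have hZZ_0 := congrFun (congrFun hZZm 0) 0
  have hZZ_1 := congrFun (congrFun hZZm 0) 1
  have hZZ_2 := congrFun (congrFun hZZm 1) 0
  have hZZ_3 := congrFun (congrFun hZZm 1) 1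
  simp only [Matrix.mul_apply, Fin.sum_univ_two, Matrix.one_apply,
    Fin.isValue, one_ne_zero, zero_ne_one, ite_true, ite_false, reduceIte,
    ne_eq, not_false_eq_true, if_true, if_false] at hZZ_0 hZZ_1 hZZ_2 hZZ_3
  have hXC_0 := congrFun (congrFun hXCm 0) 0
  have hXC_1 := congrFun (congrFun hXCm 0) 1
  have hXC_2 := congrFun (congrFun hXCm 1) 0
  have hXC_3 := congrFun (congrFun hXCm 1) 1
  simp only [Matrix.mul_apply, Fin.sum_univ_two, Matrix.one_apply,
    Fin.isValue, one_ne_zero, zero_ne_one, ite_true, ite_false, reduceIte,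
    ne_eq, not_false_eq_true, if_true, if_false] at hXC_0 hXC_1 hXC_2 hXC_3
  have hBB_0 := congrFun (congrFun hBBm 0) 0
  have hBB_1 := congrFun (congrFun hBBm 0) 1
  have hBB_2 := congrFun (congrFun hBBm 1) 0
  have hBB_3 := congrFun (congrFun hBBm 1) 1
  simp only [Matrix.mul_apply, Fin.sum_univ_two, Matrix.one_apply,
    Fin.isValue, one_ne_zero, zero_ne_one, ite_true, ite_false, reduceIte,
    ne_eq, not_false_eq_true, if_true, if_false] at hBB_0 hBB_1 hBB_2 hBB_3
  have hDD_0 := congrFun (congrFun hDDm 0) 0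
  have hDD_1 := congrFun (congrFun hDDm 0) 1
  have hDD_2 := congrFun (congrFun hDDm 1) 0
  have hDD_3 := congrFun (congrFun hDDm 1) 1
  simp only [Matrix.mul_apply, Fin.sum_univ_two, Matrix.one_apply,
    Fin.isValue, one_ne_zero, zero_ne_one, ite_true, ite_false, reduceIte,
    ne_eq, not_false_eq_true, if_true, if_false] at hDD_0 hDD_1 hDD_2 hDD_3
  have hBXBX_0 := congrFun (congrFun hBXBXm 0) 0
  have hBXBX_1 := congrFun (congrFun hBXBXm 0) 1
  have hBXBX_2 := congrFun (congrFun hBXBXm 1) 0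
  have hBXBX_3 := congrFun (congrFun hBXBXm 1) 1
  simp only [Matrix.mul_apply, Fin.sum_univ_two, Matrix.one_apply,
    Fin.isValue, one_ne_zero, zero_ne_one, ite_true, ite_false, reduceIte,
    ne_eq, not_false_eq_true, if_true, if_false] at hBXBX_0 hBXBX_1 hBXBX_2 hBXBX_3
  have hDCDC_0 := congrFun (congrFun hDCDCm 0) 0
  have hDCDC_1 := congrFun (congrFun hDCDCm 0) 1
  have hDCDC_2 := congrFun (congrFun hDCDCm 1) 0
  have hDCDC_3 := congrFun (congrFun hDCDCm 1) 1
  simp only [Matrix.mul_apply, Fin.sum_univ_two, Matrix.one_apply,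
    Fin.isValue, one_ne_zero, zero_ne_one, ite_true, ite_false, reduceIte,
    ne_eq, not_false_eq_true, if_true, if_false] at hDCDC_0 hDCDC_1 hDCDC_2 hDCDC_3
  have hBC_0 := congrFun (congrFun hBCm 0) 0
  have hBC_1 := congrFun (congrFun hBCm 0) 1
  have hBC_2 := congrFun (congrFun hBCm 1) 0
  have hBC_3 := congrFun (congrFun hBCm 1) 1
  simp only [Matrix.mul_apply, Fin.sum_univ_two, Matrix.one_apply,
    Fin.isValue, one_ne_zero, zero_ne_one, ite_true, ite_false, reduceIte,
    ne_eq, not_false_eq_true, if_true, if_false] at hBC_0 hBC_1 hBC_2 hBC_3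
  have hDX_0 := congrFun (congrFun hDXm 0) 0
  have hDX_1 := congrFun (congrFun hDXm 0) 1
  have hDX_2 := congrFun (congrFun hDXm 1) 0
  have hDX_3 := congrFun (congrFun hDXm 1) 1
  simp only [Matrix.mul_apply, Fin.sum_univ_two, Matrix.one_apply,
    Fin.isValue, one_ne_zero, zero_ne_one, ite_true, ite_false, reduceIte,
    ne_eq, not_false_eq_true, if_true, if_false] at hDX_0 hDX_1 hDX_2 hDX_3
  have hBD_0 := congrFun (congrFun hBDm 0) 0
  have hBD_1 := congrFun (congrFun hBDm 0) 1
  have hBD_2 := congrFun (congrFun hBDm 1) 0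
  have hBD_3 := congrFun (congrFun hBDm 1) 1
  simp only [Matrix.mul_apply, Fin.sum_univ_two, Matrix.one_apply,
    Fin.isValue, one_ne_zero, zero_ne_one, ite_true, ite_false, reduceIte,
    ne_eq, not_false_eq_true, if_true, if_false] at hBD_0 hBD_1 hBD_2 hBD_3
  have hZD_0 := congrFun (congrFun hZDm 0) 0
  have hZD_1 := congrFun (congrFun hZDm 0) 1
  have hZD_2 := congrFun (congrFun hZDm 1) 0
  have hZD_3 := congrFun (congrFun hZDm 1) 1
  simp only [Matrix.mul_apply, Fin.sum_univ_two, Matrix.one_apply,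
    Fin.isValue, one_ne_zero, zero_ne_one, ite_true, ite_false, reduceIte,
    ne_eq, not_false_eq_true, if_true, if_false] at hZD_0 hZD_1 hZD_2 hZD_3
  have hBXB_0 := congrFun (congrFun hBXBm 0) 0
  have hBXB_1 := congrFun (congrFun hBXBm 0) 1
  have hBXB_2 := congrFun (congrFun hBXBm 1) 0
  have hBXB_3 := congrFun (congrFun hBXBm 1) 1
  simp only [Matrix.mul_apply, Fin.sum_univ_two, Matrix.one_apply,
    Fin.isValue, one_ne_zero, zero_ne_one, ite_true, ite_false, reduceIte,
    ne_eq, not_false_eq_true, if_true, if_false] at hBXB_0 hBXB_1 hBXB_2 hBXB_3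
  have hDCD_0 := congrFun (congrFun hDCDm 0) 0
  have hDCD_1 := congrFun (congrFun hDCDm 0) 1
  have hDCD_2 := congrFun (congrFun hDCDm 1) 0
  have hDCD_3 := congrFun (congrFun hDCDm 1) 1
  simp only [Matrix.mul_apply, Fin.sum_univ_two, Matrix.one_apply,
    Fin.isValue, one_ne_zero, zero_ne_one, ite_true, ite_false, reduceIte,
    ne_eq, not_false_eq_true, if_true, if_false] at hDCD_0 hDCD_1 hDCD_2 hDCD_3
  have hBCB_0 := congrFun (congrFun hBCBm 0) 0
  have hBCB_1 := congrFun (congrFun hBCBm 0) 1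
  have hBCB_2 := congrFun (congrFun hBCBm 1) 0
  have hBCB_3 := congrFun (congrFun hBCBm 1) 1
  simp only [Matrix.mul_apply, Fin.sum_univ_two, Matrix.one_apply,
    Fin.isValue, one_ne_zero, zero_ne_one, ite_true, ite_false, reduceIte,
    ne_eq, not_false_eq_true, if_true, if_false] at hBCB_0 hBCB_1 hBCB_2 hBCB_3
  have hDXD_0 := congrFun (congrFun hDXDm 0) 0
  have hDXD_1 := congrFun (congrFun hDXDm 0) 1
  have hDXD_2 := congrFun (congrFun hDXDm 1) 0
  have hDXD_3 := congrFun (congrFun hDXDm 1) 1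
  simp only [Matrix.mul_apply, Fin.sum_univ_two, Matrix.one_apply,
    Fin.isValue, one_ne_zero, zero_ne_one, ite_true, ite_false, reduceIte,
    ne_eq, not_false_eq_true, if_true, if_false] at hDXD_0 hDXD_1 hDXD_2 hDXD_3
  have hBXCB_0 := congrFun (congrFun hBXCBm 0) 0
  have hBXCB_1 := congrFun (congrFun hBXCBm 0) 1
  have hBXCB_2 := congrFun (congrFun hBXCBm 1) 0
  have hBXCB_3 := congrFun (congrFun hBXCBm 1) 1
  simp only [Matrix.mul_apply, Fin.sum_univ_two, Matrix.one_apply,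
    Fin.isValue, one_ne_zero, zero_ne_one, ite_true, ite_false, reduceIte,
    ne_eq, not_false_eq_true, if_true, if_false] at hBXCB_0 hBXCB_1 hBXCB_2 hBXCB_3
  have hDXDX_0 := congrFun (congrFun hDXDXm 0) 0
  have hDXDX_1 := congrFun (congrFun hDXDXm 0) 1
  have hDXDX_2 := congrFun (congrFun hDXDXm 1) 0
  have hDXDX_3 := congrFun (congrFun hDXDXm 1) 1
  simp only [Matrix.mul_apply, Fin.sum_univ_two, Matrix.one_apply,
    Fin.isValue, one_ne_zero, zero_ne_one, ite_true, ite_false, reduceIte,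
    ne_eq, not_false_eq_true, if_true, if_false] at hDXDX_0 hDXDX_1 hDXDX_2 hDXDX_3
  -- the goal in terms of entries
  have hgoal : (ρ ((PresentedGroup.of 0 : Extraspecial32) ^ 2) : Matrix (Fin 2) (Fin 2) A)
      = x * x := by
    rw [map_pow]
    have : (ρ (PresentedGroup.of 0)) = a := rfl
    rw [this, pow_two]
    simp [Units.val_mul]
    rfl
  rw [hgoal, Matrix.trace_fin_two]
  simp only [Matrix.mul_apply, Fin.sum_univ_two]
  linear_combination (norm := ring1)
      ((x 0 1) * (x 1 0) * (y 0 0)^2 + (x 0 0) * (x 1 0) * (y 0 0) * (y 0 1) + (x 1 0) * (x 1 1) * (y 0 0) * (y 0 1) + (-1) * (x 0 0) * (x 0 1) * (y 0 0) * (y 1 0) + (-1) * (y 0 0)^2 * (y 0 1) * (y 1 0) + (-1) * (x 0 0)^2 * (y 0 0) * (y 1 1) + (-2) * (x 0 1) * (x 1 0) * (y 0 0) * (y 1 1) + (-1) * (x 0 0) * (x 1 0) * (y 0 1) * (y 1 1) + (-1) * (x 1 0) * (x 1 1) * (y 0 1) * (y 1 1) + (-1) * (y 0 0)^2 * (w 0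 0)^2 + (-2) * (y 0 1) * (y 1 0) * (w 0 0)^2 + (y 0 0) * (y 1 1) * (w 0 0)^2 + (-2) * (y 0 0) * (y 0 1) * (w 1 0) * (w 1 1) + (y 0 0)^2 * (w 1 1)^2 + (y 0 0) * (y 1 1) * (v 0 0)^2 + (y 0 0) * (y 0 1) * (v 1 0) * (v 1 1) + (-1) * (y 0 1) * (y 1 1) * (v 1 0) * (v 1 1) + (x 0 0)^2 + (x 0 1) * (x 1 0) + (3) * (y 0 1) * (y 1 0) + (-1) * (y 0 0) * (y 1 1) + (-1) * (w 1 1)^2 + (-1)) * hCC_0 +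
      ((x 0 1) * (x 1 1) * (y 0 0) * (y 1 0) + (y 0 0)^2 * (y 0 1) * (y 1 0) + (x 0 1) * (x 1 0) * (y 0 0) * (y 1 1) + (x 1 1)^2 * (y 0 0) * (y 1 1) + (y 0 0)^2 * (w 0 0)^2 + (2) * (y 0 1) * (y 1 0) * (w 0 0)^2 + (-1) * (y 0 0) * (y 1 1) * (w 0 0)^2 + (-2) * (y 0 0) * (y 1 0) * (w 0 0) * (w 0 1) + (-2) * (y 1 0)^2 * (w 0 1)^2 + (-2) * (y 0 1) * (y 1 0) * (w 0 0) * (w 1 1) + (2) * (y 0 0) * (y 1 0) * (w 0 1) * (w 1 1) + (-2) * (y 1 0) * (y 1 1) * (w 0 1) * (w 1 1) + (-1) * (y 0 0)^2 * (w 1 1)^2 + (-1) * (y 0 0) * (y 1 1) * (v 0 0)^2 + (y 0 0) * (y 1 1) * (v 0 1) * (v 1 0) + (-1) * (y 0 0) * (y 0 1) * (v 1 0) * (v 1 1) + (y 0 1) * (y 1 1) * (v 1 0) * (v 1 1) + (y 0 0) * (y 1 1) * (v 1 1)^2 + (-1) * (y 0 1) * (y 1 0) + (w 1 1)^2 + (-1))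 * hCC_3 +
      ((y 0 0) * (y 0 1) * (y 1 0) + (-1) * (y 0 0)^2 * (y 1 1) + (-1) * (y 0 1) * (y 1 0) * (y 1 1) + (-1) * (y 0 0) * (w 1 1)^2 + (y 0 0)) * hDCD_0 +
      ((x 1 0)^2 * (y 0 0) * (y 0 1) + (-1) * (y 0 0) * (y 0 1) * (y 1 0)^2 + (-1) * (x 1 0)^2 * (y 0 1) * (y 1 1) + (y 0 0)^2 * (y 1 0) * (y 1 1) + (y 0 1) * (y 1 0)^2 * (y 1 1) + (-2) * (y 0 0) * (y 1 0) * (w 0 0)^2 + (-1) * (y 0 0)^2 * (w 0 0) * (w 1 0) + (-2) * (y 0 1) * (y 1 0) * (w 0 0) * (w 1 0) + (y 0 0) * (y 1 1) * (w 0 0) * (w 1 0) + (-2) * (y 0 0) * (y 1 1) * (w 1 0) * (w 1 1) + (2) * (y 0 0) * (y 1 0) * (w 1 1)^2 + (-1) * (y 0 0) * (y 0 1) * (v 1 0)^2 + (y 0 1) * (y 1 1) * (v 1 0)^2 + (-1) * (y 0 0) * (y 1 1) * (v 1 0) * (v 1 1) + (x 0 0) * (x 1 0) + (x 1 0) * (x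 1 1) + (-2) * (y 0 0) * (y 1 0) + (3) * (y 1 0) * (y 1 1) + (w 1 0) * (w 1 1)) * hCC_1 +
      ((-1) * (y 0 0)^2 * (y 0 1) * (y 1 0) + (-1) * (x 1 1)^2 * (y 0 0) * (y 1 1) + (y 0 0) * (y 0 1) * (y 1 0) * (y 1 1) + (y 0 0) * (y 1 1)^3 + (y 0 0)^2 * (w 1 1)^2 + (-2) * (y 0 0)^2) * hDD_0 +
      ((-1) * (y 0 0) * (y 0 1) * (y 1 0)^2 + (2) * (x 1 0) * (x 1 1) * (y 0 0) * (y 1 1) + (-1) * (y 0 0)^2 * (y 1 0) * (y 1 1) + (y 0 1) * (y 1 0)^2 * (y 1 1) + (-2) * (y 0 0) * (y 1 0) * (y 1 1)^2 + (-2) * (y 0 0)^2 * (w 1 0) * (w 1 1) + (y 0 0) * (y 1 0) * (w 1 1)^2 + (-2) * (y 0 0) * (y 1 0)) * hDD_1 +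
      ((-1) * (y 0 0)^3 * (y 0 1) + (-1) * (y 0 0) * (y 0 1)^2 * (y 1 0) + (-1) * (x 0 0) * (x 0 1) * (y 0 0) * (y 1 1) + (y 0 0)^2 * (y 0 1) * (y 1 1) + (y 0 1)^2 * (y 1 0) * (y 1 1) + (y 0 0) * (y 0 1) * (y 1 1)^2 + (-1) * (y 0 0) * (y 0 1) * (w 1 1)^2) * hDD_2 +
      ((-1) * (y 0 0)^2 * (y 0 1) * (y 1 0) + (2) * (x 1 1)^2 * (y 0 0) * (y 1 1) + (-2) * (y 0 0) * (y 0 1) * (y 1 0) * (y 1 1) + (2) * (y 0 1) * (y 1 0) * (y 1 1)^2 + (-2) * (y 0 0) * (y 1 1)^3 + (-2) * (y 0 0) * (y 1 0) * (w 0 1) * (w 1 1) + (4) * (y 0 0) * (y 0 1) * (w 1 0) * (w 1 1) + (-2) * (y 0 0)^2 * (w 1 1)^2 + (y 0 0) * (y 1 1) * (w 1 1)^2 + (2) * (y 0 0)^2 + (-2) * (y 0 0) * (y 1 1)) * hDD_3 +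
      ((y 0 0) * (y 1 1) + (1)) * hZZ_3 +
      ((-1) * (y 0 0) * (y 1 1)) * hZZ_0 +
      ((y 0 0) * (y 1 1)^2 + (y 0 0) * (w 1 1)^2) * hDCD_3 +
      ((x 0 1) * (x 1 1) * (y 0 0)^2 + (x 1 1)^2 * (y 0 0) * (y 0 1) + (y 0 0)^3 * (y 0 1) + (y 0 0) * (y 0 1)^2 * (y 1 0) + (-1) * (x 0 1) * (x 1 1) * (y 0 0) * (y 1 1) + (-1) * (x 1 1)^2 * (y 0 1) * (y 1 1) + (-2) * (y 0 0)^2 * (y 0 1) * (y 1 1) + (-1) * (y 0 1)^2 * (y 1 0) * (y 1 1) + (-2) * (y 0 0)^2 * (w 0 0) * (w 0 1) + (-4) * (y 0 1) * (y 1 0) * (w 0 0) * (w 0 1) + (2) * (y 0 0) * (y 1 1) * (w 0 0) * (w 0 1) + (-1) * (y 0 0) * (y 1 0) * (w 0 1)^2 + (-1) * (y 0 0) * (y 0 1) * (w 0 0) * (w 1 1) + (-2) * (y 0 1) * (y 1 0) * (w 0 1) * (w 1 1) + (2) * (y 0 0) * (y 1 1) * (v 0 0) * (v 0 1) + (y 0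 0) * (y 0 1) * (v 0 1) * (v 1 0) + (-1) * (y 0 1) * (y 1 1) * (v 0 1) * (v 1 0) + (-1) * (y 0 0) * (y 0 1) * (v 0 0) * (v 1 1) + (y 0 1) * (y 1 1) * (v 0 0) * (v 1 1) + (y 0 0) * (y 1 1) * (v 0 1) * (v 1 1) + (y 0 0) * (y 0 1) * (v 1 1)^2 + (-1) * (y 0 1) * (y 1 1) * (v 1 1)^2 + (w 0 1) * (w 1 1)) * hCC_2 +
      ((-1) * (y 0 0) * (y 0 1) * (v 1 0) + (y 0 1) * (y 1 1) * (v 1 0) + (-1) * (y 0 0) * (y 1 1) * (v 1 1)) * hZD_0 +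
      ((-1) * (y 0 0) * (y 1 1)) * hDXDX_3 +
      ((x 0 1) * (y 0 0) * (y 1 1)) * hDXD_2 +
      ((x 0 1) * (y 0 0) * (y 1 1) * (v 1 1)) * hDX_2 +
      ((y 0 0) * (y 1 1)) * hDXDX_0 +
      ((-1) * (x 1 0) * (y 0 0) * (y 1 1) * (v 0 1) + (-2) * (x 1 1) * (y 0 0) * (y 1 1) * (v 1 1)) * hDX_0 +
      (0) * hDXD_0 +
      ((-1) * (y 0 0)^2 + (-2) * (y 0 1) * (y 1 0) + (y 0 0) * (y 1 1)) * hBXBX_0 +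
      ((x 0 0) * (x 1 1) * (y 0 0)^2 + (x 1 1)^2 * (y 0 0)^2 + (y 0 0)^4 + (-1) * (x 0 0) * (x 0 1) * (y 0 0) * (y 1 0) + (2) * (x 1 1)^2 * (y 0 1) * (y 1 0) + (2) * (y 0 0)^2 * (y 0 1) * (y 1 0) + (-1) * (x 1 1)^2 * (y 0 0) * (y 1 1) + (-2) * (y 0 1) * (y 1 0) * (y 1 1)^2 + (y 0 0) * (y 1 1)^3 + (-2) * (y 0 0)^2 * (v 1 1)^2 + (x 0 0)^2 + (-1) * (y 0 0) * (y 1 1)) * hBB_0 +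
      ((-2) * (x 1 0) * (x 1 1) * (y 0 0)^2 + (-1) * (x 0 1) * (x 1 0) * (y 0 0) * (y 1 0) + (3) * (x 0 0) * (x 1 1) * (y 0 0) * (y 1 0) + (-2) * (x 1 1)^2 * (y 0 0) * (y 1 0) + (2) * (y 0 0)^3 * (y 1 0) + (-4) * (x 1 0) * (x 1 1) * (y 0 1) * (y 1 0) + (2) * (x 0 1) * (x 1 1) * (y 1 0)^2 + (4) * (y 0 0) * (y 0 1) * (y 1 0)^2 + (2) * (x 1 0) * (x 1 1) * (y 0 0) * (y 1 1) + (y 0 0)^2 * (y 1 0) * (y 1 1) + (2) * (y 0 1) * (y 1 0)^2 * (y 1 1) + (y 0 0) * (y 1 0) * (y 1 1)^2 + (-2) * (y 0 0) * (y 1 0) * (v 1 1)^2 + (x 0 0) * (x 1 0) + (-1) * (y 1 0) * (y 1 1)) * hBB_1 +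
      ((-1) * (x 0 1) * (x 1 1) * (y 0 0)^2 + (x 0 0) * (x 1 1) * (y 0 0) * (y 0 1) + (y 0 0)^3 * (y 0 1) + (2) * (x 0 1)^2 * (y 0 0) * (y 1 0) + (-1) * (x 0 0) * (x 0 1) * (y 0 0) * (y 1 1) + (x 0 1) * (x 1 1) * (y 0 0) * (y 1 1) + (y 0 0)^2 * (y 0 1) * (y 1 1) + (-2) * (y 0 0) * (y 0 1) * (v 0 1) * (v 1 0) + (-2) * (y 0 0) * (y 0 1) * (v 1 1)^2 + (x 0 0) * (x 0 1) + (-1) * (y 0 1) * (y 1 1)) * hBB_2 +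
      ((-1) * (x 1 1)^2 * (y 0 0)^2 + (-1) * (y 0 0)^4 + (x 0 0) * (x 0 1) * (y 0 0) * (y 1 0) + (x 0 1) * (x 1 1) * (y 0 0) * (y 1 0) + (2) * (x 0 0) * (x 1 1) * (y 0 1) * (y 1 0) + (-4) * (x 1 1)^2 * (y 0 1) * (y 1 0) + (-1) * (y 0 0)^2 * (y 0 1) * (y 1 0) + (2) * (y 0 1)^2 * (y 1 0)^2 + (x 1 1)^2 * (y 0 0) * (y 1 1) + (2) * (x 0 1) * (x 1 1) * (y 1 0) * (y 1 1) + (-1) * (y 0 0) * (y 0 1) * (y 1 0) * (y 1 1) + (y 0 0)^2 * (y 1 1)^2 + (2) * (y 0 1) * (y 1 0) * (y 1 1)^2 + (2) * (y 0 0) * (y 0 1) * (v 0 0) * (v 1 0) + (-2) * (y 0 0) * (y 1 0) * (v 0 1) * (v 1 1) + (2) * (y 0 0)^2 * (v 1 1)^2 + (-2) * (y 0 0) * (y 1 1) * (v 1 1)^2 + (-1) * (x 0 0)^2 + (y 0 0) * (y 1 1) + (-1) * (y 1 1)^2) * hBB_3 +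
      ((-1) * (x 0 1) * (y 0 0)^3 + (x 1 0) * (y 0 0) * (w 0 1)^2 + (x 0 1) * (y 0 0) * (w 0 0) * (w 1 1) + (3) * (x 1 1) * (y 0 0) * (w 0 1) * (w 1 1)) * hXC_2 +
      ((-2) * (y 0 0) * (y 1 0)) * hBXBX_1 +
      ((-2) * (x 1 1)^2 * (y 1 0) * (w 0 1) + (y 0 0)^2 * (y 1 0) * (w 0 1) + (2) * (y 0 1) * (y 1 0)^2 * (w 0 1) + (y 0 0) * (y 1 0) * (y 1 1) * (w 0 1) + (2) * (y 1 0) * (y 1 1)^2 * (w 0 1) + (x 0 1) * (x 1 0) * (y 0 0) * (w 1 1) + (x 1 1)^2 * (y 0 0) * (w 1 1) + (-1) * (y 0 0)^3 * (w 1 1) + (-2) * (y 0 0) * (y 0 1) * (y 1 0) * (w 1 1) + (-1) * (y 0 0)^2 * (y 1 1) * (w 1 1) + (-2) * (y 0 0) * (y 1 1)^2 * (w 1 1) + (2) * (y 0 0) * (w 0 1) * (v 1 0) * (v 1 1) + (4) * (y 0 0) * (w 1 1) * (v 1 1)^2 + (-3) * (y 0 0) * (w 1 1)) * hBC_0 +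
      ((x 0 1) * (y 0 0) * (y 1 0)^2 + (-1) * (x 1 0) * (y 0 0) * (w 0 0) * (w 1 1) + (-2) * (x 1 0) * (y 1 0) * (w 0 1) * (w 1 1) + (-1) * (x 1 1) * (y 0 0) * (w 1 0) * (w 1 1) + (x 1 0) * (y 0 0) * (w 1 1)^2 + (-2) * (x 1 1) * (y 1 0) * (w 1 1)^2 + (x 0 0) * (y 1 0) + (3) * (x 1 1) * (y 1 0)) * hXC_1 +
      ((x 1 0) * (y 0 0)^2 * (y 0 1) + (x 0 1) * (y 0 0)^2 * (y 1 0) + (-1) * (x 0 1) * (y 0 0) * (y 1 0) * (y 1 1) + (-1) * (x 1 0) * (y 0 1) * (y 1 1)^2 + (-2) * (x 1 0) * (y 1 0) * (w 0 1)^2 + (2) * (x 1 1) * (y 0 0) * (w 0 0) * (w 1 1) + (-2) * (x 1 1) * (y 1 0) * (w 0 1) * (w 1 1) + (-2) * (x 0 1) * (y 0 0) * (w 1 0) * (w 1 1) + (-2) * (x 1 1) * (y 0 0) * (w 1 1)^2 + (x 0 0) * (y 0 0) + (x 1 1) * (y 0 0) + (x 0 0) * (y 1 1) + (x 1 1) *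 (y 1 1)) * hXC_0 +
      ((-2) * (x 1 1)^2 * (y 1 0) * (w 1 1) + (y 0 0)^2 * (y 1 0) * (w 1 1) + (2) * (y 0 1) * (y 1 0)^2 * (w 1 1) + (y 0 0) * (y 1 0) * (y 1 1) * (w 1 1) + (2) * (y 1 0) * (y 1 1)^2 * (w 1 1) + (-2) * (y 0 0) * (w 1 1) * (v 1 0) * (v 1 1)) * hBC_1 +
      ((-1) * (x 0 0) * (x 1 1) * (y 0 0) + (-2) * (x 0 1) * (x 1 1) * (y 1 0) + (2) * (y 0 0) * (y 0 1) * (y 1 0) + (-1) * (y 0 0)^2 * (y 1 1) + (2) * (y 0 1) * (y 1 0) * (y 1 1) + (-1) * (y 0 0) * (y 1 1)^2 + (2) * (y 0 0) * (v 1 1)^2 + (y 1 1)) * hBCB_0 +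
      ((2) * (y 0 0) * (w 1 0) * (w 1 1) + (-1) * (y 1 0)) * hDCD_1 +
      ((-1) * (x 0 1) * (y 0 0)) * hBXCB_2 +
      ((x 0 1) * (y 0 0) * (y 1 0) + (-1) * (x 0 0)) * hBXB_0 +
      ((x 0 1) * (y 0 0) * (y 1 1)) * hBXB_2 +
      ((x 0 0) * (x 0 1) * (y 0 0)) * hBCB_2 +
      (0) * hBC_2 +
      ((2) * (y 0 0) * (y 1 0) * (w 1 1) * (v 0 1) + (-2) * (y 0 0) * (y 1 0) * (w 0 1) * (v 1 1) + (-2) * (y 0 0)^2 * (w 1 1) * (v 1 1) + (2) * (y 0 0) * (y 1 1) * (w 1 1) * (v 1 1)) * hBD_0 +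
      ((-2) * (y 0 0) * (y 0 1) * (w 1 1) * (v 1 1)) * hBD_2 +
      ((2) * (y 0 0) * (y 0 1) * (w 1 0) * (v 1 0)) * hBD_1 +
      ((y 0 0) * (y 0 1) + (-1) * (y 0 1) * (y 1 1)) * hDCDC_2 +
      (0) * hDXDX_2 +
      ((-1) * (y 0 0) * (y 0 1) * (v 1 1) + (y 0 1) * (y 1 1) * (v 1 1)) * hZD_2 +
      ((y 0 0) * (y 0 1) + (-1) * (y 0 1) * (y 1 1)) * hZZ_2 +
      ((y 0 0) * (y 0 1) * (y 1 1) + (-1) * (y 0 1) * (y 1 1)^2) * hDCD_2 +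
      ((1)) * hDCDC_0 +
      ((x 1 1)) * hBXB_3
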